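/- Let n ≥ 1 and d ≥ 2 be integers, let S : (Fin d → Fin n) → ℂ be symmetric with associated polynomial function f and contraction F as in the context, and set M = sSup{ |f(x)| : x ∈ ℂⁿ, ‖x‖ = 1 } (the spectral norm of S, by Banach's theorem). Then: (a) there exists x ∈ ℂⁿ with ‖x‖ = 1 such that F_l(x) = M · conj(x_l) for every l ∈ Fin n; (b) for every x ∈ ℂⁿ with ‖x‖ = 1 and every λ ∈ ℝ such that F_l(x) = λ · conj(x_l) for all l, one has |λ| ≤ M. -/

import Mathlib

open Finset

section StmtFiveAux
variable {m n : ℕ}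

private lemma sum_cons_aux5 (g : (Fin (m+1) → Fin n) → ℂ) :
    ∑ i, g i = ∑ l, ∑ i : Fin m → Fin n, g (Fin.cons l i) := by
  rw [← Equiv.sum_comp (Fin.consEquiv fun _ => Fin n) g, Fintype.sum_prod_type]
  rfl

private lemma prod_erase_zero_aux5 (h : Fin (m+1) → ℂ) :
    ∏ k ∈ (univ : Finset (Fin (m+1))).erase 0, h k = ∏ k : Fin m, h k.succ := by
  have : (univ : Finset (Fin (m+1))).erase 0 = univ.image Fin.succ := by
    ext k; simp [Fin.exists_succ_eq, eq_comm]
  rw [this, Finset.prod_image (fun a _ b _ h => Fin.succ_injective _ h)]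

private lemma swap_step_aux5 (S : (Fin (m+1) → Fin n) → ℂ)
    (hS : ∀ (σ : Equiv.Perm (Fin (m+1))) (i : Fin (m+1) → Fin n), S (i ∘ σ) = S i)
    (x v : Fin n → ℂ) (j : Fin (m+1)) :
    ∑ i : Fin (m+1) → Fin n, S i * ((∏ k ∈ univ.erase j, x (i k)) * v (i j))
      = ∑ i : Fin (m+1) → Fin n, S i * ((∏ k ∈ univ.erase 0, x (i k)) * v (i 0)) := by
  set σ := Equiv.swap (0 : Fin (m+1)) j with hσ
  have hσσ : ∀ k, σ (σ k) = k := fun k => Equiv.swap_apply_self _ _ _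
  have hinv : Function.Involutive (fun i : Fin (m+1) → Fin n => i ∘ σ) := by
    intro i; funext k; simp [Function.comp, hσσ]
  refine (Fintype.sum_bijective (fun i => i ∘ σ) hinv.bijective _ _ fun i => ?_).symm
  rw [hS σ i]
  congr 1
  have hj0 : σ 0 = j := Equiv.swap_apply_left 0 j
  have hjj : σ j = 0 := Equiv.swap_apply_right 0 j
  have hprod : ∏ k ∈ univ.erase 0, x (i k) = ∏ k ∈ univ.erase j, x ((i ∘ σ) k) := by
    refine Finset.prod_equiv σ (fun k => ?_) (fun k _ => by simp [Function.comp, hσσ])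
    simp only [mem_erase, mem_univ, and_true]
    constructor
    · intro hk hc; exact hk (by rw [← hσσ k, hc, hjj])
    · intro hk hc; rw [hc] at hk; exact hk hj0
  rw [hprod]
  congr 1
  simp [Function.comp, hjj]

private lemma key_deriv_aux5 (S : (Fin (m+1) → Fin n) → ℂ)
    (hS : ∀ (σ : Equiv.Perm (Fin (m+1))) (i : Fin (m+1) → Fin n), S (i ∘ σ) = S i)
    (F : Fin n → (Fin n → ℂ) → ℂ)
    (hF' : ∀ l x, F l x = ∑ i : Fin m → Fin n, S (Fin.cons l i) * ∏ k, x (i k))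
    (x v : Fin n → ℂ) :
    HasDerivAt (fun t : ℂ => ∑ i : Fin (m+1) → Fin n, S i * ∏ k, (x (i k) + t * v (i k)))
      (((m : ℂ) + 1) * ∑ l, v l * F l x) 0 := by
  have hp : ∀ i : Fin (m+1) → Fin n,
      HasDerivAt (fun t : ℂ => ∏ k, (x (i k) + t * v (i k)))
        (∑ j, (∏ k ∈ univ.erase j, x (i k)) * v (i j)) 0 := by
    intro i
    have h := HasDerivAt.fun_finsetProd (u := univ) (x := (0:ℂ))
      (f := fun k t => x (i k) + t * v (i k)) (f' := fun k => v (i k))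
      (fun k _ => by simpa using ((hasDerivAt_id (0:ℂ)).mul_const (v (i k))).const_add (x (i k)))
    simpa [smul_eq_mul] using h
  have h := HasDerivAt.fun_sum (u := univ) fun i _ => (hp i).const_mul (S i)
  refine h.congr_deriv ?_
  symm
  have hrhs : ∀ i : Fin (m+1) → Fin n,
      S i * ∑ j, (∏ k ∈ univ.erase j, x (i k)) * v (i j)
        = ∑ j, S i * ((∏ k ∈ univ.erase j, x (i k)) * v (i j)) := fun i => Finset.mul_sum _ _ _
  simp_rw [hrhs]
  rw [Finset.sum_comm]
  have hstep : ∀ j : Fin (m+1),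
      ∑ i : Fin (m+1) → Fin n, S i * ((∏ k ∈ univ.erase j, x (i k)) * v (i j))
        = ∑ l, v l * F l x := by
    intro j
    rw [swap_step_aux5 S hS x v j, sum_cons_aux5]
    refine Finset.sum_congr rfl fun l _ => ?_
    rw [hF', Finset.mul_sum]
    refine Finset.sum_congr rfl fun i _ => ?_
    rw [prod_erase_zero_aux5]
    simp only [Fin.cons_succ, Fin.cons_zero]
    ring
  simp_rw [hstep]
  rw [Finset.sum_const, card_univ, Fintype.card_fin, nsmul_eq_mul]
  push_cast
  ring

end StmtFiveAux

set_option maxHeartbeats 2000000 in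
theorem stmt_5 (n d : ℕ) (hn : 1 ≤ n) (hd : 2 ≤ d)
    (S : (Fin d → Fin n) → ℂ)
    (hS : ∀ (σ : Equiv.Perm (Fin d)) (i : Fin d → Fin n), S (i ∘ σ) = S i)
    (f : (Fin n → ℂ) → ℂ)
    (hf : ∀ x, f x = ∑ i : Fin d → Fin n, S i * ∏ k, x (i k))
    (F : Fin n → (Fin n → ℂ) → ℂ)
    (hF : ∀ l x, F l x = ∑ i : Fin (d - 1) → Fin n,
        S (fun k => (Fin.cons l i : Fin (d - 1 + 1) → Fin n)
              (Fin.cast (by omega : d - 1 + 1 = d).symm k)) *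
          ∏ k, x (i k))
    (M : ℝ)
    (hM : M = sSup {r : ℝ | ∃ x : Fin n → ℂ,
        (∑ l, ‖x l‖ ^ 2) = 1 ∧ r = ‖f x‖}) :
    (∃ x : Fin n → ℂ, (∑ l, ‖x l‖ ^ 2) = 1 ∧
        ∀ l, F l x = (M : ℂ) * (starRingEnd ℂ) (x l)) ∧
    (∀ x : Fin n → ℂ, (∑ l, ‖x l‖ ^ 2) = 1 →
      ∀ lam : ℝ, (∀ l, F l x = (lam : ℂ) * (starRingEnd ℂ) (x l)) → |lam| ≤ M) := by
  obtain ⟨m, rfl⟩ : ∃ m, d = m + 1 := ⟨d - 1, by omega⟩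
  have hF' : ∀ l x, F l x = ∑ i : Fin m → Fin n, S (Fin.cons l i) * ∏ k, x (i k) := by
    intro l x
    rw [hF l x]
    rfl
  clear hF
  -- contraction identity
  have hcontract : ∀ x : Fin n → ℂ, ∑ l, x l * F l x = f x := by
    intro x
    rw [hf, sum_cons_aux5]
    refine Finset.sum_congr rfl fun l _ => ?_
    rw [hF', Finset.mul_sum]
    refine Finset.sum_congr rfl fun i _ => ?_
    rw [Fin.prod_univ_succ]
    simp only [Fin.cons_succ, Fin.cons_zero]
    ring
  -- homogeneity
  have hhom : ∀ (c : ℂ) (x : Fin n → ℂ), f (c • x) = c^(m+1) * f x := by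
    intro c x
    rw [hf, hf, Finset.mul_sum]
    refine Finset.sum_congr rfl fun i _ => ?_
    simp only [Pi.smul_apply, smul_eq_mul]
    rw [Finset.prod_mul_distrib, Finset.prod_const, card_univ, Fintype.card_fin]
    ring
  -- bounded above
  have hBdd : BddAbove {r : ℝ | ∃ x : Fin n → ℂ,
      (∑ l, ‖x l‖ ^ 2) = 1 ∧ r = ‖f x‖} := by
    refine ⟨∑ i : Fin (m+1) → Fin n, ‖S i‖, ?_⟩
    rintro r ⟨x, hx, rfl⟩
    have hxl : ∀ l, ‖x l‖ ≤ 1 := by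
      intro l
      have h1 : ‖x l‖ ^ 2 ≤ 1 := by
        rw [← hx]
        exact Finset.single_le_sum (f := fun l => ‖x l‖ ^ 2)
          (fun l _ => sq_nonneg _) (mem_univ l)
      nlinarith [norm_nonneg (x l)]
    rw [hf]
    refine le_trans (norm_sum_le _ _) (Finset.sum_le_sum fun i _ => ?_)
    rw [norm_mul]
    have hp : ‖∏ k, x (i k)‖ ≤ 1 := by
      rw [norm_prod]
      exact Finset.prod_le_one (fun k _ => norm_nonneg _) (fun k _ => hxl _)
    calc ‖S i‖ * ‖∏ k, x (i k)‖
        ≤ ‖S i‖ * 1 :=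
          mul_le_mul_of_nonneg_left hp (norm_nonneg _)
      _ = ‖S i‖ := mul_one _
  have hMle : ∀ y : Fin n → ℂ, (∑ l, ‖y l‖ ^ 2) = 1 → ‖f y‖ ≤ M := by
    intro y hy
    rw [hM]
    exact le_csSup hBdd ⟨y, hy, rfl⟩
  -- compactness and maximizer
  have hgcont : Continuous fun x : Fin n → ℂ => ∑ l, ‖x l‖ ^ 2 :=
    continuous_finset_sum _ fun l _ =>
      (continuous_norm.comp (continuous_apply l)).pow 2
  have hfcont : Continuous f := by
    rw [funext hf]
    exact continuous_finset_sum _ fun i _ =>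
      continuous_const.mul (continuous_finset_prod _ fun k _ => continuous_apply _)
  have hKc : IsCompact {x : Fin n → ℂ | (∑ l, ‖x l‖ ^ 2) = 1} := by
    have hclosed : IsClosed {x : Fin n → ℂ | (∑ l, ‖x l‖ ^ 2) = 1} :=
      isClosed_eq hgcont continuous_const
    have hsub : {x : Fin n → ℂ | (∑ l, ‖x l‖ ^ 2) = 1}
        ⊆ Metric.closedBall 0 1 := by
      intro x hx
      rw [Metric.mem_closedBall, dist_zero_right]
      refine (pi_norm_le_iff_of_nonneg zero_le_one).2 fun l => ?_
      have h1 : ‖x l‖ ^ 2 ≤ 1 := by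
        rw [← hx]
        exact Finset.single_le_sum (f := fun l => ‖x l‖ ^ 2)
          (fun l _ => sq_nonneg _) (mem_univ l)
      nlinarith [norm_nonneg (x l)]
    exact (isCompact_closedBall (0 : Fin n → ℂ) 1).of_isClosed_subset hclosed hsub
  have hKne : {x : Fin n → ℂ | (∑ l, ‖x l‖ ^ 2) = 1}.Nonempty := by
    refine ⟨Pi.single ⟨0, hn⟩ (1:ℂ), ?_⟩
    simp only [Set.mem_setOf_eq, Pi.single_apply]
    rw [Finset.sum_eq_single (⟨0, hn⟩ : Fin n)]
    · simp
    · intro b _ hb; simp [hb]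
    · simp
  obtain ⟨xm, hxmK, hxmmax⟩ := hKc.exists_isMaxOn hKne
    (continuous_norm.comp hfcont).continuousOn
  have hMeq : M = ‖f xm‖ := by
    rw [hM]
    apply le_antisymm
    · exact csSup_le ⟨_, ⟨xm, hxmK, rfl⟩⟩ (by rintro r ⟨y, hy, rfl⟩; exact hxmmax hy)
    · exact le_csSup hBdd ⟨xm, hxmK, rfl⟩
  have hM0 : 0 ≤ M := hMeq ▸ norm_nonneg _
  -- phase rotation: a unit vector where f attains the real value M
  obtain ⟨x₀, hx₀K, hfx₀⟩ : ∃ x₀ : Fin n → ℂ,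
      (∑ l, ‖x₀ l‖ ^ 2) = 1 ∧ f x₀ = (M : ℂ) := by
    by_cases h0 : f xm = 0
    · refine ⟨xm, hxmK, ?_⟩
      rw [h0, hMeq, h0]
      simp
    · obtain ⟨u, hu⟩ := IsAlgClosed.exists_pow_nat_eq ((M:ℂ) / f xm) (Nat.succ_pos m)
      have habsfm : ‖f xm‖ ≠ 0 := by simpa using h0
      have h1 : ‖u‖ ^ (m+1) = 1 := by
        rw [← norm_pow, hu, norm_div, Complex.norm_real, Real.norm_eq_abs, abs_of_nonneg hM0, hMeq]
        field_simp
      have huabs : ‖u‖ = 1 := by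
        rcases lt_trichotomy (‖u‖) 1 with h | h | h
        · exfalso
          have := pow_lt_one₀ (norm_nonneg _) h (Nat.succ_ne_zero m)
          rw [h1] at this; exact lt_irrefl 1 this
        · exact h
        · exfalso
          have := one_lt_pow₀ h (Nat.succ_ne_zero m)
          rw [h1] at this; exact lt_irrefl 1 this
      refine ⟨u • xm, ?_, ?_⟩
      · have : ∀ l, ‖(u • xm) l‖ ^ 2 = ‖xm l‖ ^ 2 := by
          intro l
          simp [Pi.smul_apply, smul_eq_mul, map_mul, huabs]
        simp_rw [this]
        exact hxmK
      · rw [hhom, hu, div_mul_cancel₀ _ h0]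
  -- squared homogeneous bound
  have hsq : ∀ y : Fin n → ℂ,
      ‖f y‖ ^ 2 ≤ M ^ 2 * (∑ l, ‖y l‖ ^ 2) ^ (m+1) := by
    intro y
    have hr0 : 0 ≤ ∑ l, ‖y l‖ ^ 2 :=
      Finset.sum_nonneg fun l _ => sq_nonneg _
    rcases eq_or_lt_of_le hr0 with h | h
    · have hy0 : ∀ l, y l = 0 := by
        intro l
        have := (Finset.sum_eq_zero_iff_of_nonneg
          (fun l _ => sq_nonneg _ : ∀ l ∈ univ, (0:ℝ) ≤ ‖y l‖ ^ 2)).1 h.symm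
          l (mem_univ l)
        have h2 : ‖y l‖ = 0 := by nlinarith [norm_nonneg (y l)]
        simpa using h2
      have hfy : f y = 0 := by
        rw [hf]
        refine Finset.sum_eq_zero fun i _ => ?_
        rw [Finset.prod_eq_zero (mem_univ (0 : Fin (m+1))) (hy0 (i 0)), mul_zero]
      rw [hfy, ← h]
      simp
    · set s := Real.sqrt (∑ l, ‖y l‖ ^ 2) with hs
      have hs0 : 0 < s := Real.sqrt_pos.2 h
      have hs2 : s ^ 2 = ∑ l, ‖y l‖ ^ 2 := Real.sq_sqrt hr0
      set u : Fin n → ℂ := ((s⁻¹ : ℝ) : ℂ) • y with hudef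
      have huK : (∑ l, ‖u l‖ ^ 2) = 1 := by
        have : ∀ l, ‖u l‖ ^ 2 = s⁻¹ ^ 2 * ‖y l‖ ^ 2 := by
          intro l
          simp only [hudef, Pi.smul_apply, smul_eq_mul, norm_mul, Complex.norm_real, Real.norm_eq_abs,
            abs_of_pos (inv_pos.2 hs0)]
          ring
        simp_rw [this]
        rw [← Finset.mul_sum, ← hs2]
        field_simp
      have hyu : y = ((s : ℝ) : ℂ) • u := by
        funext l
        simp only [hudef, Pi.smul_apply, smul_eq_mul, ← mul_assoc]
        rw [← Complex.ofReal_mul, mul_inv_cancel₀ (ne_of_gt hs0)]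
        simp
      have habsfu : ‖f u‖ ≤ M := hMle u huK
      have hcalc : ‖f y‖ = s ^ (m+1) * ‖f u‖ := by
        rw [hyu, hhom, norm_mul, norm_pow, Complex.norm_real, Real.norm_eq_abs, abs_of_pos hs0]
      rw [hcalc]
      calc (s ^ (m+1) * ‖f u‖) ^ 2
          = (s ^ 2) ^ (m+1) * ‖f u‖ ^ 2 := by ring
        _ ≤ (s ^ 2) ^ (m+1) * M ^ 2 := by
            refine mul_le_mul_of_nonneg_left ?_ (pow_nonneg (sq_nonneg s) _)
            exact pow_le_pow_left₀ (norm_nonneg _) habsfu 2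
        _ = M ^ 2 * (∑ l, ‖y l‖ ^ 2) ^ (m+1) := by rw [hs2]; ring
  -- the derivative of f along complex lines
  have hDeriv : ∀ x v : Fin n → ℂ,
      HasDerivAt (fun t : ℂ => f (x + t • v)) (((m : ℂ) + 1) * ∑ l, v l * F l x) 0 := by
    intro x v
    have he : (fun t : ℂ => f (x + t • v))
        = fun t => ∑ i : Fin (m+1) → Fin n, S i * ∏ k, (x (i k) + t * v (i k)) := by
      funext t
      rw [hf]
      simp [Pi.add_apply, Pi.smul_apply, smul_eq_mul]
    rw [he]
    exact key_deriv_aux5 S hS F hF' x v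
  -- part (b)
  have partb : ∀ x : Fin n → ℂ, (∑ l, ‖x l‖ ^ 2) = 1 →
      ∀ lam : ℝ, (∀ l, F l x = (lam : ℂ) * (starRingEnd ℂ) (x l)) → |lam| ≤ M := by
    intro x hx lam hl
    have hfx : f x = (lam : ℂ) := by
      rw [← hcontract x]
      have : ∀ l, x l * F l x = (lam : ℂ) * ((‖x l‖ ^ 2 : ℝ) : ℂ) := by
        intro l
        rw [hl l, show x l * ((lam:ℂ) * (starRingEnd ℂ) (x l))
            = (lam:ℂ) * (x l * (starRingEnd ℂ) (x l)) by ring, Complex.mul_conj]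
        norm_cast
        rw [Complex.sq_norm]
      simp_rw [this]
      rw [← Finset.mul_sum]
      norm_cast
      rw [hx]
      simp
    have habs : |lam| = ‖f x‖ := by rw [hfx, Complex.norm_real, Real.norm_eq_abs]
    rw [habs]
    exact hMle x hx
  refine ⟨?_, partb⟩
  by_cases hMz : M = 0
  · -- degenerate case: f vanishes identically, so does F on the sphere
    refine ⟨x₀, hx₀K, fun l => ?_⟩
    have hf0 : ∀ y, f y = 0 := by
      intro y
      have h := hsq y
      rw [hMz] at h
      have : ‖f y‖ = 0 := by nlinarith [norm_nonneg (f y)]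
      simpa using this
    have hc : (fun t : ℂ => f (x₀ + t • (Pi.single l 1 : Fin n → ℂ))) = fun _ => 0 := funext fun t => hf0 _
    have h0 : HasDerivAt (fun t : ℂ => f (x₀ + t • (Pi.single l 1 : Fin n → ℂ))) 0 0 := by
      rw [hc]; exact hasDerivAt_const 0 0
    have huniq := (hDeriv x₀ (Pi.single l 1 : Fin n → ℂ)).unique h0
    have hsum : ∑ l', (Pi.single l 1 : Fin n → ℂ) l' * F l' x₀ = F l x₀ := by
      rw [Finset.sum_eq_single l]
      · simp
      · intro b _ hb; simp [Pi.single_apply, hb]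
      · simp
    rw [hsum] at huniq
    have hm1 : ((m : ℂ) + 1) ≠ 0 := by
      have := Nat.cast_add_one_ne_zero (R := ℂ) m
      simpa using this
    have : F l x₀ = 0 := by
      rcases mul_eq_zero.1 huniq with h | h
      · exact absurd h hm1
      · exact h
    rw [this, hMz]
    simp
  · -- main case: M > 0, variational argument at x₀
    have hMpos : 0 < M := lt_of_le_of_ne hM0 (Ne.symm hMz)
    have key : ∀ v : Fin n → ℂ,
        (∑ l, v l * F l x₀).re = M * (∑ l, v l * (starRingEnd ℂ) (x₀ l)).re := by
      intro v
      set B : ℝ := ∑ l, (x₀ l * (starRingEnd ℂ) (v l)).re with hB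
      set Cc : ℝ := ∑ l, ‖v l‖ ^ 2 with hCc
      have hterm : ∀ (t : ℝ) (a b : ℂ), ‖a + (t:ℂ) * b‖ ^ 2
          = ‖a‖ ^ 2 + 2 * (a * (starRingEnd ℂ) b).re * t
            + ‖b‖ ^ 2 * t ^ 2 := by
        intro t a b
        simp only [Complex.sq_norm]
        have hre : (a * (starRingEnd ℂ) ((t:ℂ) * b)).re
            = t * (a * (starRingEnd ℂ) b).re := by
          rw [map_mul, Complex.conj_ofReal,
            show a * ((t:ℂ) * (starRingEnd ℂ) b) = (t:ℂ) * (a * (starRingEnd ℂ) b) by ring,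
            Complex.re_ofReal_mul]
        rw [Complex.normSq_add, Complex.normSq_mul, Complex.normSq_ofReal, hre]
        ring
      have hQ : ∀ t : ℝ, (∑ l, ‖x₀ l + (t:ℂ) * v l‖ ^ 2)
          = 1 + 2*B*t + Cc*t^2 := by
        intro t
        simp_rw [hterm t]
        rw [Finset.sum_add_distrib, Finset.sum_add_distrib, hx₀K]
        congr 1
        · congr 1
          rw [hB, Finset.mul_sum, Finset.sum_mul]
        · rw [hCc, Finset.sum_mul]
      -- real-variable derivative of t ↦ f (x₀ + t v)
      have hDr : HasDerivAt (fun t : ℝ => f (x₀ + (t:ℂ) • v))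
          (((m : ℂ) + 1) * ∑ l, v l * F l x₀) 0 := by
        have h := hDeriv x₀ v
        have h' : HasDerivAt (fun t : ℂ => f (x₀ + t • v))
            (((m : ℂ) + 1) * ∑ l, v l * F l x₀) ((0:ℝ):ℂ) := by
          rw [Complex.ofReal_zero]; exact h
        exact h'.comp_ofReal
      set W : ℂ := ∑ l, v l * F l x₀ with hW
      have hPre : HasDerivAt (fun t : ℝ => (f (x₀ + (t:ℂ) • v)).re)
          ((((m : ℂ) + 1) * W).re) 0 := by
        have := (Complex.reCLM.hasFDerivAt (x := f (x₀ + ((0:ℝ):ℂ) • v))).comp_hasDerivAt 0 hDr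
        exact this
      have hQd : HasDerivAt (fun t : ℝ => 1 + 2*B*t + Cc*t^2) (2*B) 0 := by
        have h1 : HasDerivAt (fun t : ℝ => 1 + 2*B*t) (2*B) 0 := by
          simpa using ((hasDerivAt_id (0:ℝ)).const_mul (2*B)).const_add 1
        have h2 : HasDerivAt (fun t : ℝ => Cc*t^2) 0 0 := by
          simpa using (hasDerivAt_pow 2 (0:ℝ)).const_mul Cc
        exact (h1.add h2).congr_deriv (add_zero _)
      have hφd : HasDerivAt
          (fun t : ℝ => M^2 * (1 + 2*B*t + Cc*t^2)^(m+1) - ((f (x₀ + (t:ℂ) • v)).re)^2)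
          (M^2 * (((m:ℝ)+1) * 1^m * (2*B)) - 2 * M * (((m : ℂ) + 1) * W).re) 0 := by
        have hq := (hQd.pow (m+1)).const_mul (M^2)
        have hpr := hPre.pow 2
        have := hq.sub hpr
        refine this.congr_deriv ?_
        symm
        have hv0 : (fun t : ℝ => (t:ℂ) • v) 0 = fun l => 0 := by
          funext l; simp
        have hP0 : (f (x₀ + ((0:ℝ):ℂ) • v)).re = M := by
          have : x₀ + ((0:ℝ):ℂ) • v = x₀ := by funext l; simp
          rw [this, hfx₀, Complex.ofReal_re]
        rw [hP0]
        push_cast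
        ring
      have hmin : IsLocalMin
          (fun t : ℝ => M^2 * (1 + 2*B*t + Cc*t^2)^(m+1) - ((f (x₀ + (t:ℂ) • v)).re)^2) 0 := by
        apply Filter.Eventually.of_forall
        intro t
        have hP0 : (f (x₀ + ((0:ℝ):ℂ) • v)).re = M := by
          have : x₀ + ((0:ℝ):ℂ) • v = x₀ := by funext l; simp
          rw [this, hfx₀, Complex.ofReal_re]
        have hval0 : M^2 * (1 + 2*B*(0:ℝ) + Cc*(0:ℝ)^2)^(m+1)
            - ((f (x₀ + ((0:ℝ):ℂ) • v)).re)^2 = 0 := by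
          rw [hP0]; simp
        have hge : ∀ s : ℝ, 0 ≤ M^2 * (1 + 2*B*s + Cc*s^2)^(m+1)
            - ((f (x₀ + (s:ℂ) • v)).re)^2 := by
          intro s
          have h1 := hsq (x₀ + (s:ℂ) • v)
          have h2 : (∑ l, ‖(x₀ + (s:ℂ) • v) l‖ ^ 2)
              = 1 + 2*B*s + Cc*s^2 := by
            rw [← hQ s]
            refine Finset.sum_congr rfl fun l _ => ?_
            simp [Pi.add_apply, Pi.smul_apply, smul_eq_mul]
          rw [h2] at h1
          have h3 : ((f (x₀ + (s:ℂ) • v)).re)^2 ≤ ‖f (x₀ + (s:ℂ) • v)‖ ^ 2 := by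
            rw [← sq_abs ((f (x₀ + (s:ℂ) • v)).re)]
            exact pow_le_pow_left₀ (abs_nonneg _) (Complex.abs_re_le_norm _) 2
          linarith
        show M^2 * (1 + 2*B*(0:ℝ) + Cc*(0:ℝ)^2)^(m+1) - ((f (x₀ + ((0:ℝ):ℂ) • v)).re)^2
            ≤ M^2 * (1 + 2*B*t + Cc*t^2)^(m+1) - ((f (x₀ + (t:ℂ) • v)).re)^2
        rw [hval0]
        exact hge t
      have hz := hmin.hasDerivAt_eq_zero hφd
      -- extract the first-order condition
      have hWre : (((m : ℂ) + 1) * W).re = ((m:ℝ)+1) * W.re := by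
        have : ((m : ℂ) + 1) = (((m:ℝ)+1 : ℝ) : ℂ) := by push_cast; ring
        rw [this, Complex.re_ofReal_mul]
      rw [hWre] at hz
      have hk : (0:ℝ) < (m:ℝ) + 1 := by positivity
      have hre : W.re = M * B := by
        have h1m : (1:ℝ)^m = 1 := one_pow m
        rw [h1m] at hz
        have h2 : ((m:ℝ)+1) * (2*M) * (M*B - W.re) = 0 := by linear_combination hz
        have hne : ((m:ℝ)+1) * (2*M) ≠ 0 := by positivity
        have h3 : M*B - W.re = 0 := (mul_eq_zero.mp h2).resolve_left hne
        linarith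
      rw [hW] at hre
      rw [hre]
      congr 1
      rw [hB, Complex.re_sum]
      refine Finset.sum_congr rfl fun l _ => ?_
      simp only [Complex.mul_re, Complex.conj_re, Complex.conj_im]
      ring
    refine ⟨x₀, hx₀K, fun l => ?_⟩
    have hgen : ∀ (c : ℂ) (Z : Fin n → ℂ),
        ∑ l', (Pi.single l c : Fin n → ℂ) l' * Z l' = c * Z l := by
      intro c Z
      rw [Finset.sum_eq_single l]
      · simp
      · intro b _ hb; simp [Pi.single_apply, hb]
      · simp
    have k1 := key (Pi.single l 1)
    rw [hgen 1 (fun l' => F l' x₀), hgen 1 (fun l' => (starRingEnd ℂ) (x₀ l'))] at k1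
    simp only [one_mul] at k1
    have k2 := key (Pi.single l Complex.I)
    rw [hgen Complex.I (fun l' => F l' x₀),
      hgen Complex.I (fun l' => (starRingEnd ℂ) (x₀ l'))] at k2
    simp only [Complex.mul_re, Complex.I_re, Complex.I_im, zero_mul, one_mul, zero_sub] at k2
    apply Complex.ext
    · rw [Complex.re_ofReal_mul]
      exact k1
    · simp only [Complex.mul_im, Complex.ofReal_re, Complex.ofReal_im, zero_mul, add_zero]
      linarith [k2]
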